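/- Let d ≥ 2, f : ℝ^d → ℝ defined by f(x₁,...,x_d) = |x₁|, and let ε : ℝ^d → (0,∞) be a continuous function with lim_{|x|→∞} ε(x) = 0. Then there is no C¹ convex function g : ℝ^d → ℝ with |f(x) − g(x)| ≤ ε(x) for all x ∈ ℝ^d. -/

import Mathlib

open Filter

/-- A convex function on ℝ bounded above is constant. -/
lemma convex_const_of_bddAbove_aux {ψ : ℝ → ℝ} (h : ConvexOn ℝ Set.univ ψ)
    {M : ℝ} (hb : ∀ t, ψ t ≤ M) : ∀ a b : ℝ, ψ a = ψ b := by
  -- first: nonincreasing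
  have key1 : ∀ a b : ℝ, a < b → ψ b ≤ ψ a := by
    intro a b hab
    by_contra hlt
    push_neg at hlt
    set s : ℝ := (ψ b - ψ a) / (b - a) with hs_def
    have hs : 0 < s := div_pos (by linarith) (by linarith)
    set c : ℝ := b + (M - ψ b) / s + 1 with hc_def
    have hMb : 0 ≤ (M - ψ b) / s := div_nonneg (by linarith [hb b]) hs.le
    clear_value s c
    have hc : b < c := by rw [hc_def]; linarith
    have hslope := h.slope_mono_adjacent (Set.mem_univ a) (Set.mem_univ c) hab hc
    rw [← hs_def] at hslope
    have hcb : 0 < c - b := by linarith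
    have h1 : s * (c - b) ≤ ψ c - ψ b := (le_div_iff₀ hcb).1 hslope
    have h2 : s * (c - b) = (M - ψ b) + s := by
      have hcb2 : c - b = (M - ψ b) / s + 1 := by rw [hc_def]; ring
      rw [hcb2, mul_add, mul_one, ← mul_div_assoc, mul_div_cancel_left₀ _ hs.ne']
    have := hb c
    nlinarith
  have key2 : ∀ a b : ℝ, a < b → ψ a ≤ ψ b := by
    intro a b hab
    by_contra hlt
    push_neg at hlt
    set s : ℝ := (ψ b - ψ a) / (b - a) with hs_def
    have hs : s < 0 := div_neg_of_neg_of_pos (by linarith) (by linarith)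
    set c : ℝ := a - ((M - ψ a) / (-s) + 1) with hc_def
    have hMa : 0 ≤ (M - ψ a) / (-s) := div_nonneg (by linarith [hb a]) (by linarith)
    clear_value s c
    have hc : c < a := by rw [hc_def]; linarith
    have hslope := h.slope_mono_adjacent (Set.mem_univ c) (Set.mem_univ b) hc hab
    rw [← hs_def] at hslope
    have hac : 0 < a - c := by linarith
    have h1 : ψ a - ψ c ≤ s * (a - c) := by
      rw [← div_le_iff₀ hac]
      exact hslope
    have h2 : s * (a - c) = -((M - ψ a) + (-s)) := by
      have hac2 : a - c = (M - ψ a) / (-s) + 1 := by rw [hc_def]; ring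
      have hs0 : s ≠ 0 := ne_of_lt hs
      rw [hac2, div_neg, mul_add, mul_one, mul_neg, ← mul_div_assoc,
        mul_div_cancel_left₀ _ hs0]
      ring
    have := hb c
    nlinarith
  intro a b
  rcases lt_trichotomy a b with h' | h' | h'
  · exact le_antisymm (key2 a b h') (key1 a b h')
  · rw [h']
  · exact le_antisymm (key1 b a h') (key2 b a h')

/-- For `d ≥ 2` and `f x = |x₁|` on ℝ^d, there is no C¹ convex function
approximating `f` within a continuous positive error tending to `0` at
infinity. -/
theorem no_C1_fine_approx_of_abs_coordinate (d : ℕ) (hd : 2 ≤ d)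
    (ε : (Fin d → ℝ) → ℝ) (hεpos : ∀ x, 0 < ε x) (hεcont : Continuous ε)
    (hεlim : Tendsto ε (Filter.cocompact (Fin d → ℝ)) (nhds 0)) :
    ¬ ∃ g : (Fin d → ℝ) → ℝ,
        ContDiff ℝ 1 g ∧ ConvexOn ℝ Set.univ g ∧
        ∀ x, |(|x ⟨0, by omega⟩|) - g x| ≤ ε x := by
  rintro ⟨g, hg, hconv, happrox⟩
  set i0 : Fin d := ⟨0, by omega⟩ with hi0_def
  set i1 : Fin d := ⟨1, by omega⟩ with hi1_def
  have hi01 : i0 ≠ i1 := by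
    intro h
    have := congrArg Fin.val h
    simp [i0, i1] at this
  set e1 : Fin d → ℝ := Pi.single i0 1 with he1_def
  set e2 : Fin d → ℝ := Pi.single i1 1 with he2_def
  have he2i0 : e2 i0 = 0 := Pi.single_eq_of_ne hi01 1
  have he2i1 : e2 i1 = 1 := Pi.single_eq_same i1 1
  have he1i0 : e1 i0 = 1 := Pi.single_eq_same i0 1
  -- ε is bounded above
  obtain ⟨M, hM⟩ : ∃ M : ℝ, ∀ x, ε x ≤ M := by
    have h1 : ε ⁻¹' Set.Iio 1 ∈ cocompact (Fin d → ℝ) :=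
      hεlim (Iio_mem_nhds one_pos)
    obtain ⟨K, hK, hKs⟩ := mem_cocompact.1 h1
    obtain ⟨m, hm⟩ := (hK.bddAbove_image hεcont.continuousOn)
    refine ⟨max m 1, fun x => ?_⟩
    by_cases hx : x ∈ K
    · exact le_trans (hm ⟨x, hx, rfl⟩) (le_max_left _ _)
    · exact le_trans (hKs hx).le (le_max_right _ _)
  -- g is constant along the e2 direction
  have hconst : ∀ (x : Fin d → ℝ) (t : ℝ), g (x + t • e2) = g x := by
    intro x t
    have hψ : ConvexOn ℝ Set.univ (fun t : ℝ => g (x + t • e2)) := by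
      have hA := hconv.comp_affineMap (AffineMap.lineMap x (x + e2))
      have heq : (g ∘ ⇑(AffineMap.lineMap x (x + e2))) = fun t : ℝ => g (x + t • e2) := by
        funext t
        simp [AffineMap.lineMap_apply, add_comm]
      have hset : (⇑(AffineMap.lineMap x (x + e2)) ⁻¹' Set.univ : Set ℝ) = Set.univ := by
        simp
      rw [heq, hset] at hA
      exact hA
    have hbd : ∀ t : ℝ, g (x + t • e2) ≤ |x i0| + M := by
      intro t
      have h1 := happrox (x + t • e2)
      have h2 : (x + t • e2) i0 = x i0 := by
        simp [he2i0]
      rw [h2] at h1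
      have := abs_le.1 h1
      linarith [hM (x + t • e2), this.1]
    have := convex_const_of_bddAbove_aux hψ hbd t 0
    simpa using this
  -- hence g x = |x i0| everywhere
  have hval : ∀ x : Fin d → ℝ, g x = |x i0| := by
    intro x
    have hline : Tendsto (fun t : ℝ => x + t • e2) atTop (cocompact (Fin d → ℝ)) := by
      apply tendsto_cocompact_of_tendsto_dist_comp_atTop (0 : Fin d → ℝ)
      apply tendsto_atTop_mono (fun t : ℝ => ?_) (tendsto_atTop_add_const_right atTop (-|x i1|) tendsto_id)
      have h1 : |(x + t • e2) i1| ≤ dist (x + t • e2) 0 := by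
        rw [dist_zero_right]
        exact norm_le_pi_norm (x + t • e2) i1
      have h2 : (x + t • e2) i1 = x i1 + t := by simp [he2i1]
      rw [h2] at h1
      have h3 : t + -|x i1| ≤ |x i1 + t| := by
        have ha := le_abs_self (x i1 + t)
        have hb := neg_abs_le (x i1)
        linarith
      calc id t + -|x i1| = t + -|x i1| := rfl
        _ ≤ |x i1 + t| := h3
        _ ≤ dist (x + t • e2) 0 := h1
    have htend : Tendsto (fun t : ℝ => ε (x + t • e2)) atTop (nhds 0) :=
      hεlim.comp hline
    have hle : ∀ t : ℝ, |(|x i0| - g x)| ≤ ε (x + t • e2) := by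
      intro t
      have h1 := happrox (x + t • e2)
      have h2 : (x + t • e2) i0 = x i0 := by simp [he2i0]
      rw [h2, hconst x t] at h1
      exact h1
    have h0 : |(|x i0| - g x)| ≤ 0 :=
      ge_of_tendsto htend (Eventually.of_forall hle)
    have h00 : |x i0| - g x = 0 := abs_eq_zero.1 (le_antisymm h0 (abs_nonneg _))
    linarith
  -- contradiction with differentiability at 0 along e1
  have hφ : (fun s : ℝ => g (s • e1)) = fun s : ℝ => |s| := by
    funext s
    rw [hval]
    simp [he1i0]
  have hdiff : DifferentiableAt ℝ (fun s : ℝ => g (s • e1)) 0 := by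
    have hg' : DifferentiableAt ℝ g ((0 : ℝ) • e1) :=
      (hg.differentiable one_ne_zero).differentiableAt
    exact hg'.comp 0 ((differentiable_id.smul_const e1) 0)
  rw [hφ] at hdiff
  exact not_differentiableAt_abs_zero hdiff
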